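/- Let X be a real Banach space, f₁ : X → ℝ convex, and φ₁, …, φ_m : X → ℝ continuous affine functions. Let C = {x ∈ X : f₁(x) − max_{1≤i≤m} φ_i(x) ≤ 0}, and suppose each set C_i = {x ∈ X : f₁(x) − φ_i(x) ≤ 0} is nonempty. Then C = ⋃_{i=1}^m C_i, each C_i is convex, d_C(x) = min_{1≤i≤m} d_{C_i}(x) for all x, and d_C is DC on X. -/

import Mathlib

open Metric Filter Topology

/-- A function `f : X → ℝ` is DC (delta-convex) if it is the difference of two convex
functions on `X`. -/
def IsDC {X : Type*} [NormedAddCommGroup X] [NormedSpace ℝ X] (f : X → ℝ) : Prop :=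
  ∃ g h : X → ℝ, ConvexOn ℝ Set.univ g ∧ ConvexOn ℝ Set.univ h ∧ ∀ x, f x = g x - h x

lemma convexOn_infDist' {X : Type*} [NormedAddCommGroup X] [NormedSpace ℝ X]
    {S : Set X} (hne : S.Nonempty) (hS : Convex ℝ S) :
    ConvexOn ℝ Set.univ (fun x => Metric.infDist x S) := by
  refine ⟨convex_univ, fun x _ y _ a b ha hb hab => ?_⟩
  refine le_of_forall_pos_le_add fun ε hε => ?_
  obtain ⟨u, huS, hu⟩ := (Metric.infDist_lt_iff hne).1
    (lt_add_of_pos_right (Metric.infDist x S) (half_pos hε))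
  obtain ⟨v, hvS, hv⟩ := (Metric.infDist_lt_iff hne).1
    (lt_add_of_pos_right (Metric.infDist y S) (half_pos hε))
  have hmem : a • u + b • v ∈ S := hS huS hvS ha hb hab
  calc Metric.infDist (a • x + b • y) S ≤ dist (a • x + b • y) (a • u + b • v) :=
        Metric.infDist_le_dist_of_mem hmem
    _ ≤ dist (a • x) (a • u) + dist (b • y) (b • v) := dist_add_add_le _ _ _ _
    _ = a * dist x u + b * dist y v := by
        rw [dist_smul₀, dist_smul₀, Real.norm_of_nonneg ha, Real.norm_of_nonneg hb]
    _ ≤ a * (Metric.infDist x S + ε / 2) + b * (Metric.infDist y S + ε / 2) := by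
        have := hu.le; have := hv.le; gcongr
    _ = a * Metric.infDist x S + b * Metric.infDist y S + (a + b) * (ε / 2) := by ring
    _ = a * Metric.infDist x S + b * Metric.infDist y S + ε / 2 := by rw [hab, one_mul]
    _ ≤ a * Metric.infDist x S + b * Metric.infDist y S + ε := by linarith

lemma convexOn_finset_sum {X : Type*} [NormedAddCommGroup X] [NormedSpace ℝ X]
    {ι : Type*} [DecidableEq ι] {t : Finset ι} {f : ι → X → ℝ}
    (h : ∀ i ∈ t, ConvexOn ℝ Set.univ (f i)) :
    ConvexOn ℝ Set.univ (fun x => ∑ i ∈ t, f i x) := by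
  induction t using Finset.induction_on with
  | empty => simpa using convexOn_const 0 convex_univ
  | insert _ _ hni ih =>
    simp_rw [Finset.sum_insert hni]
    exact (h _ (Finset.mem_insert_self _ _)).add
      (ih fun i hi => h i (Finset.mem_insert_of_mem hi))

lemma convexOn_ciSup_fin {X : Type*} [NormedAddCommGroup X] [NormedSpace ℝ X]
    {m : ℕ} [Nonempty (Fin m)] {f : Fin m → X → ℝ}
    (hf : ∀ i, ConvexOn ℝ Set.univ (f i)) :
    ConvexOn ℝ Set.univ (fun x => ⨆ i, f i x) := by
  refine ⟨convex_univ, fun x _ y _ a b ha hb hab => ?_⟩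
  refine ciSup_le fun i => ?_
  calc f i (a • x + b • y) ≤ a * f i x + b * f i y :=
        (hf i).2 (Set.mem_univ x) (Set.mem_univ y) ha hb hab
    _ ≤ a * (⨆ j, f j x) + b * (⨆ j, f j y) := by
        gcongr
        · exact le_ciSup (Set.Finite.bddAbove (Set.finite_range fun j => f j x)) i
        · exact le_ciSup (Set.Finite.bddAbove (Set.finite_range fun j => f j y)) i

/-- If `C = {x : f₁(x) - max_i φ_i(x) ≤ 0}` with `f₁` convex and the `φ_i` continuous
affine, and the convex sets `C_i = {x : f₁(x) - φ_i(x) ≤ 0}` are nonempty, then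
`C = ⋃ i, C_i`, `d_C = min_i d_{C_i}`, and `d_C` is DC on `X`. -/
theorem infDist_DC_of_affine_max_representation
    (X : Type*) [NormedAddCommGroup X] [NormedSpace ℝ X] [CompleteSpace X]
    (m : ℕ) (hm : 0 < m)
    (f₁ : X → ℝ) (hf₁ : ConvexOn ℝ Set.univ f₁)
    (φ : Fin m → X → ℝ)
    (hφ : ∀ i, ∃ (ψ : X →L[ℝ] ℝ) (c : ℝ), ∀ x, φ i x = ψ x + c)
    (hCi : ∀ i, {x : X | f₁ x - φ i x ≤ 0}.Nonempty) :
    ({x : X | f₁ x - ⨆ i, φ i x ≤ 0} = ⋃ i, {x : X | f₁ x - φ i x ≤ 0}) ∧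
    (∀ i, Convex ℝ {x : X | f₁ x - φ i x ≤ 0}) ∧
    (∀ x : X, Metric.infDist x {x' : X | f₁ x' - ⨆ i, φ i x' ≤ 0}
        = ⨅ i, Metric.infDist x {x' : X | f₁ x' - φ i x' ≤ 0}) ∧
    IsDC (fun x : X => Metric.infDist x {x' : X | f₁ x' - ⨆ i, φ i x' ≤ 0}) := by
  haveI : Nonempty (Fin m) := Fin.pos_iff_nonempty.mp hm
  -- Part 1: the union representation
  have hunion : {x : X | f₁ x - ⨆ i, φ i x ≤ 0} = ⋃ i, {x : X | f₁ x - φ i x ≤ 0} := by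
    ext x
    simp only [Set.mem_setOf_eq, Set.mem_iUnion, sub_nonpos]
    constructor
    · intro h
      obtain ⟨i, hi⟩ := exists_eq_ciSup_of_finite (f := fun i => φ i x)
      exact ⟨i, hi ▸ h⟩
    · rintro ⟨i, hi⟩
      exact hi.trans (le_ciSup (Set.Finite.bddAbove (Set.finite_range fun j => φ j x)) i)
  -- Part 2: convexity of each Cᵢ
  have hconv : ∀ i, Convex ℝ {x : X | f₁ x - φ i x ≤ 0} := by
    intro i x hx y hy a b ha hb hab
    obtain ⟨ψ, c, hψ⟩ := hφ i
    simp only [Set.mem_setOf_eq, sub_nonpos] at hx hy ⊢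
    have h1 : f₁ (a • x + b • y) ≤ a * f₁ x + b * f₁ y :=
      hf₁.2 (Set.mem_univ x) (Set.mem_univ y) ha hb hab
    have h2 : φ i (a • x + b • y) = a * φ i x + b * φ i y := by
      simp only [hψ, map_add, map_smul, smul_eq_mul]
      linear_combination (-c) * hab
    rw [h2]
    calc f₁ (a • x + b • y) ≤ a * f₁ x + b * f₁ y := h1
      _ ≤ a * φ i x + b * φ i y :=
          add_le_add (mul_le_mul_of_nonneg_left hx ha) (mul_le_mul_of_nonneg_left hy hb)
  -- nonemptiness of C
  have hCne : {x : X | f₁ x - ⨆ i, φ i x ≤ 0}.Nonempty := by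
    rw [hunion]
    obtain ⟨y, hy⟩ := hCi (Classical.arbitrary (Fin m))
    exact ⟨y, Set.mem_iUnion.2 ⟨_, hy⟩⟩
  -- Part 3: infDist identity
  have hdist : ∀ x : X, Metric.infDist x {x' : X | f₁ x' - ⨆ i, φ i x' ≤ 0}
      = ⨅ i, Metric.infDist x {x' : X | f₁ x' - φ i x' ≤ 0} := by
    intro x
    rw [hunion]
    apply le_antisymm
    · refine le_ciInf fun i => ?_
      exact Metric.infDist_le_infDist_of_subset
        (Set.subset_iUnion (fun j => {x' : X | f₁ x' - φ j x' ≤ 0}) i) (hCi i)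
    · by_contra h
      push_neg at h
      obtain ⟨y, hy, hdy⟩ := (Metric.infDist_lt_iff (hunion ▸ hCne)).1 h
      obtain ⟨i, hyi⟩ := Set.mem_iUnion.1 hy
      have : (⨅ j, Metric.infDist x {x' : X | f₁ x' - φ j x' ≤ 0})
          ≤ Metric.infDist x {x' : X | f₁ x' - φ i x' ≤ 0} :=
        ciInf_le (Set.Finite.bddBelow (Set.finite_range _)) i
      exact absurd ((this.trans (Metric.infDist_le_dist_of_mem hyi)).trans_lt hdy)
        (lt_irrefl _)
  -- Part 4: DC
  refine ⟨hunion, hconv, hdist, ?_⟩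
  set d : Fin m → X → ℝ := fun i x => Metric.infDist x {x' : X | f₁ x' - φ i x' ≤ 0} with hd
  have hdconv : ∀ i, ConvexOn ℝ Set.univ (d i) :=
    fun i => convexOn_infDist' (hCi i) (hconv i)
  refine ⟨fun x => ∑ j, d j x, fun x => ⨆ i, (∑ j, d j x - d i x), ?_, ?_, ?_⟩
  · exact convexOn_finset_sum fun j _ => hdconv j
  · refine convexOn_ciSup_fin fun i => ?_
    have : (fun x => ∑ j, d j x - d i x) = fun x => ∑ j ∈ Finset.univ.erase i, d j x := by
      funext x
      rw [← Finset.sum_erase_add Finset.univ _ (Finset.mem_univ i)]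
      ring
    rw [this]
    exact convexOn_finset_sum fun j _ => hdconv j
  · intro x
    show Metric.infDist x {x' : X | f₁ x' - ⨆ i, φ i x' ≤ 0}
      = (∑ j, d j x) - ⨆ i, (∑ j, d j x - d i x)
    rw [hdist x]
    have key : (⨆ i, (∑ j, d j x - d i x)) = ∑ j, d j x - ⨅ i, d i x := by
      obtain ⟨i₀, hi₀⟩ := exists_eq_ciInf_of_finite (f := fun i => d i x)
      apply le_antisymm
      · refine ciSup_le fun i => ?_
        have : (⨅ j, d j x) ≤ d i x := ciInf_le (Set.Finite.bddBelow (Set.finite_range _)) i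
        linarith
      · have : (∑ j, d j x - ⨅ i, d i x) = ∑ j, d j x - d i₀ x := by rw [hi₀]
        rw [this]
        exact le_ciSup (f := fun i => ∑ j, d j x - d i x)
          (Set.Finite.bddAbove (Set.finite_range _)) i₀
    rw [key]
    ring
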